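/- arXiv:1311.3016 — 3 statements merged into one kernel-verified Lean document; each statement's English description precedes it below -/
import Mathlib

section
/- Let μ be a probability measure on Ω_ℓ = Ω × R^ℓ with ℓ ≥ 1 and define S_z(ω, z_{1,ℓ}) = (T_{z₁}ω, (z_{2,ℓ}, z)) for z ∈ R. Then μ satisfies E^μ[max_{z∈R} f∘S_z] ≥ E^μ[f] for all bounded measurable f : Ω_ℓ → ℝ if and only if E^μ[f(ω, z_{1,ℓ−1})] = E^μ[f(T_{z₁}ω, z_{2,ℓ})] for all bounded measurable f : Ω × R^{ℓ−1} → ℝ. -/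
open MeasureTheory Finset

/-- Lemma 7.2: for `ℓ = m+1 ≥ 1`, a probability measure `μ` on `Ω × R^ℓ` is
`S`-invariant (`E^μ[max_z f∘S_z] ≥ E^μ[f]` for all bounded measurable `f`)
iff `E^μ[f(ω, z_{1,ℓ−1})] = E^μ[f(T_{z₁}ω, z_{2,ℓ})]` for all bounded measurable `f`. -/
theorem stmt_8 {Ω R : Type*} [MeasurableSpace Ω]
    [Fintype R] [Nonempty R] [MeasurableSpace R] [MeasurableSingletonClass R]
    (T : R → Ω → Ω) (hT : ∀ z, Measurable (T z)) (m : ℕ)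
    (μ : Measure (Ω × (Fin (m + 1) → R))) [IsProbabilityMeasure μ] :
    (∀ f : Ω × (Fin (m + 1) → R) → ℝ, Measurable f → (∃ M, ∀ η, |f η| ≤ M) →
        ∫ η, f η ∂μ ≤ ∫ η, Finset.univ.sup' Finset.univ_nonempty
          (fun z => f (T (η.2 0) η.1, Fin.snoc (fun i => η.2 i.succ) z)) ∂μ)
    ↔ (∀ g : Ω × (Fin m → R) → ℝ, Measurable g → (∃ M, ∀ η, |g η| ≤ M) →
        ∫ η, g (η.1, Fin.init η.2) ∂μ
          = ∫ η, g (T (η.2 0) η.1, fun i => η.2 i.succ) ∂μ) := by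
  have hA : Measurable fun η : Ω × (Fin (m + 1) → R) => (η.1, Fin.init η.2) :=
    measurable_fst.prodMk (measurable_pi_lambda _ fun i =>
      (measurable_pi_apply _).comp measurable_snd)
  have hint : ∀ (F : Ω × (Fin (m + 1) → R) → ℝ), Measurable F → (∃ M, ∀ η, |F η| ≤ M) →
      Integrable F μ := by
    rintro F hF ⟨M, hM⟩
    exact (integrable_const M).mono' hF.aestronglyMeasurable
      (ae_of_all _ fun η => by simpa using hM η)
  constructor
  · intro h g hg ⟨M, hM⟩
    have key1 := h (fun η => g (η.1, Fin.init η.2)) (hg.comp hA) ⟨M, fun η => hM _⟩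
    have key2 := h (fun η => - g (η.1, Fin.init η.2)) ((hg.comp hA).neg)
      ⟨M, fun η => by simpa using hM (η.1, Fin.init η.2)⟩
    simp only [Fin.init_snoc, Finset.sup'_const] at key1 key2
    rw [integral_neg, integral_neg] at key2
    linarith
  · intro h f hf ⟨M, hM⟩
    set g : Ω × (Fin m → R) → ℝ :=
      fun p => Finset.univ.sup' Finset.univ_nonempty (fun z => f (p.1, Fin.snoc p.2 z)) with hgdef
    have hsnoc : ∀ z : R,
        Measurable fun p : Ω × (Fin m → R) => ((p.1, Fin.snoc p.2 z) : Ω × (Fin (m+1) → R)) := by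
      intro z
      refine measurable_fst.prodMk (measurable_pi_lambda _ fun i => ?_)
      induction i using Fin.lastCases with
      | last => simp only [Fin.snoc_last]; exact measurable_const
      | cast i =>
        simp only [Fin.snoc_castSucc]
        exact (measurable_pi_apply i).comp measurable_snd
    have hg : Measurable g := by
      have := Finset.measurable_sup' (f := fun z (p : Ω × (Fin m → R)) => f (p.1, Fin.snoc p.2 z))
        Finset.univ_nonempty (fun z _ => hf.comp (hsnoc z))
      have heq : g = Finset.univ.sup'
          (α := Ω × (Fin m → R) → ℝ) Finset.univ_nonempty
          (fun z (p : Ω × (Fin m → R)) => f (p.1, Fin.snoc p.2 z)) := by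
        funext p
        simp [hgdef, Finset.sup'_apply]
      rw [heq]
      exact this
    have hgB : ∃ M, ∀ p, |g p| ≤ M := by
      refine ⟨M, fun p => abs_le.2 ⟨?_, ?_⟩⟩
      · obtain ⟨z⟩ := ‹Nonempty R›
        have h1 : -M ≤ f (p.1, Fin.snoc p.2 z) := (abs_le.1 (hM _)).1
        exact h1.trans (Finset.le_sup' (f := fun z => f (p.1, Fin.snoc p.2 z)) (Finset.mem_univ z))
      · exact Finset.sup'_le _ _ fun z _ => (abs_le.1 (hM _)).2
    have key := h g hg hgB
    have step1 : ∫ η, f η ∂μ ≤ ∫ η, g (η.1, Fin.init η.2) ∂μ := by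
      refine integral_mono (hint f hf ⟨M, hM⟩) (hint _ (hg.comp hA) ?_) ?_
      · obtain ⟨M', hM'⟩ := hgB
        exact ⟨M', fun η => hM' _⟩
      · intro η
        have h2 : f (η.1, Fin.snoc (Fin.init η.2) (η.2 (Fin.last m)))
            ≤ g (η.1, Fin.init η.2) :=
          Finset.le_sup' (f := fun z => f (η.1, Fin.snoc (Fin.init η.2) z))
            (Finset.mem_univ (η.2 (Fin.last m)))
        rwa [Fin.snoc_init_self] at h2
    calc ∫ η, f η ∂μ ≤ ∫ η, g (η.1, Fin.init η.2) ∂μ := step1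
      _ = ∫ η, g (T (η.2 0) η.1, fun i => η.2 i.succ) ∂μ := key
      _ = _ := rfl
end

section
/- Let μ be a probability measure on Ω_ℓ with ℓ ≥ 1. If μ is S-invariant (E^μ[max_{z∈R} f∘S_z] ≥ E^μ[f] for all bounded measurable f), then μ is invariant under the Markov kernel q((ω,z_{1,ℓ}), (T_{z₁}ω, z_{2,ℓ}, z)) = μ_ℓ(z | T_{z₁}ω, z_{2,ℓ}), where μ_ℓ(·|ω,z_{1,ℓ−1}) is the conditional distribution of Z_ℓ under μ given (ω, z_{1,ℓ−1}). -/
open MeasureTheory Finset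

/-- Lemma 7.6 (i)⇒(ii) for `ℓ = m+1 ≥ 1`: an `S`-invariant probability measure `μ`
on `Ω × R^ℓ` is invariant under the Markov kernel
`q((ω,z_{1,ℓ}),(T_{z₁}ω, z_{2,ℓ}, z)) = μ_ℓ(z | T_{z₁}ω, z_{2,ℓ})` built from the
conditional distribution `κ = μ_ℓ(·|ω, z_{1,ℓ−1})` of the last step. -/
theorem stmt_9 {Ω R : Type*} [MeasurableSpace Ω]
    [Fintype R] [Nonempty R] [MeasurableSpace R] [MeasurableSingletonClass R]
    (T : R → Ω → Ω) (hT : ∀ z, Measurable (T z)) (m : ℕ)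
    (μ : Measure (Ω × (Fin (m + 1) → R))) [IsProbabilityMeasure μ]
    (κ : Ω × (Fin m → R) → R → ℝ)
    (hκm : ∀ z, Measurable (fun η => κ η z))
    (hκ0 : ∀ η z, 0 ≤ κ η z) (hκ1 : ∀ η, ∑ z : R, κ η z = 1)
    (hcond : ∀ f : Ω × (Fin (m + 1) → R) → ℝ, Measurable f → (∃ M, ∀ η, |f η| ≤ M) →
        ∫ η, f η ∂μ = ∫ η, ∑ z : R,
          κ (η.1, Fin.init η.2) z * f (η.1, Fin.snoc (Fin.init η.2) z) ∂μ)
    (hSinv : ∀ f : Ω × (Fin (m + 1) → R) → ℝ, Measurable f → (∃ M, ∀ η, |f η| ≤ M) →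
        ∫ η, f η ∂μ ≤ ∫ η, Finset.univ.sup' Finset.univ_nonempty
          (fun z => f (T (η.2 0) η.1, Fin.snoc (fun i => η.2 i.succ) z)) ∂μ) :
    ∀ f : Ω × (Fin (m + 1) → R) → ℝ, Measurable f → (∃ M, ∀ η, |f η| ≤ M) →
      ∫ η, f η ∂μ = ∫ η, ∑ z : R,
        κ (T (η.2 0) η.1, fun i => η.2 i.succ) z *
          f (T (η.2 0) η.1, Fin.snoc (fun i => η.2 i.succ) z) ∂μ := by
  intro f hf hfbd
  obtain ⟨M, hM⟩ := hfbd
  have hinit : Measurable (Fin.init : (Fin (m + 1) → R) → (Fin m → R)) :=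
    measurable_pi_lambda _ fun i => measurable_pi_apply _
  have hsnoc : ∀ z : R,
      Measurable (fun x : Fin m → R => (Fin.snoc x z : Fin (m + 1) → R)) := by
    intro z
    apply measurable_pi_lambda
    intro i
    refine Fin.lastCases ?_ ?_ i
    · simpa using measurable_const
    · intro j; simpa using measurable_pi_apply j
  set g : Ω × (Fin (m + 1) → R) → ℝ := fun η =>
    ∑ z, κ (η.1, Fin.init η.2) z * f (η.1, Fin.snoc (Fin.init η.2) z) with hg
  have hgmeas : Measurable g := by
    apply Finset.measurable_sum
    intro z _
    exact ((hκm z).comp (measurable_fst.prodMk (hinit.comp measurable_snd))).mul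
      (hf.comp (measurable_fst.prodMk ((hsnoc z).comp (hinit.comp measurable_snd))))
  have hgbd : ∀ η, |g η| ≤ M := by
    intro η
    calc |g η| ≤ ∑ z, |κ (η.1, Fin.init η.2) z * f (η.1, Fin.snoc (Fin.init η.2) z)| :=
          Finset.abs_sum_le_sum_abs _ _
      _ ≤ ∑ z, κ (η.1, Fin.init η.2) z * M := by
          apply Finset.sum_le_sum
          intro z _
          rw [abs_mul, abs_of_nonneg (hκ0 _ _)]
          exact mul_le_mul_of_nonneg_left (hM _) (hκ0 _ _)
      _ = M := by rw [← Finset.sum_mul, hκ1, one_mul]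
  have hkey : ∀ (ω : Ω) (x : Fin m → R) (z : R),
      g (ω, Fin.snoc x z) = ∑ w, κ (ω, x) w * f (ω, Fin.snoc x w) := by
    intro ω x z
    simp [hg, Fin.init_snoc]
  have h1 : ∫ η, f η ∂μ = ∫ η, g η ∂μ := hcond f hf ⟨M, hM⟩
  have hsup : ∀ η : Ω × (Fin (m + 1) → R),
      (Finset.univ.sup' Finset.univ_nonempty fun z =>
        g (T (η.2 0) η.1, Fin.snoc (fun i => η.2 i.succ) z)) =
      ∑ w, κ (T (η.2 0) η.1, fun i => η.2 i.succ) w *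
        f (T (η.2 0) η.1, Fin.snoc (fun i => η.2 i.succ) w) := by
    intro η
    have heq : (fun z => g (T (η.2 0) η.1, Fin.snoc (fun i => η.2 i.succ) z)) =
        fun _ : R => ∑ w, κ (T (η.2 0) η.1, fun i => η.2 i.succ) w *
          f (T (η.2 0) η.1, Fin.snoc (fun i => η.2 i.succ) w) := by
      funext z; exact hkey _ _ z
    rw [heq, Finset.sup'_const]
  have hsupneg : ∀ η : Ω × (Fin (m + 1) → R),
      (Finset.univ.sup' Finset.univ_nonempty fun z =>
        -g (T (η.2 0) η.1, Fin.snoc (fun i => η.2 i.succ) z)) =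
      -∑ w, κ (T (η.2 0) η.1, fun i => η.2 i.succ) w *
        f (T (η.2 0) η.1, Fin.snoc (fun i => η.2 i.succ) w) := by
    intro η
    have heq : (fun z => -g (T (η.2 0) η.1, Fin.snoc (fun i => η.2 i.succ) z)) =
        fun _ : R => -∑ w, κ (T (η.2 0) η.1, fun i => η.2 i.succ) w *
          f (T (η.2 0) η.1, Fin.snoc (fun i => η.2 i.succ) w) := by
      funext z; rw [hkey _ _ z]
    rw [heq, Finset.sup'_const]
  have h2 : ∫ η, g η ∂μ ≤ ∫ η, ∑ w, κ (T (η.2 0) η.1, fun i => η.2 i.succ) w *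
      f (T (η.2 0) η.1, Fin.snoc (fun i => η.2 i.succ) w) ∂μ := by
    have := hSinv g hgmeas ⟨M, hgbd⟩
    simp only [hsup] at this
    exact this
  have h3 : ∫ η, ∑ w, κ (T (η.2 0) η.1, fun i => η.2 i.succ) w *
      f (T (η.2 0) η.1, Fin.snoc (fun i => η.2 i.succ) w) ∂μ ≤ ∫ η, g η ∂μ := by
    have := hSinv (fun η => -g η) hgmeas.neg ⟨M, fun η => by
      simpa [abs_neg] using hgbd η⟩
    simp only [hsupneg, integral_neg] at this
    linarith
  rw [h1]
  exact le_antisymm h2 h3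
end

section
/- For a probability measure μ on a finite set Ω and the uniform kernel p(ω,ω') = |R|^{-1} ∑_{z∈R} 1{T_zω = ω'}, the Donsker–Varadhan identity holds: inf_{q: μq=μ} H(μ×q | μ×p) = sup_{f:Ω→ℝ} { E^μ[f] − E^μ[ log ∑_{z∈R} |R|^{-1} e^{f(T_zω)} ] }. -/
open Finset
open Pointwise

set_option linter.unusedSectionVars false

namespace DVaux

variable {Ω : Type*} [Fintype Ω] [DecidableEq Ω]

lemma relent_nonneg (a b : Ω → ℝ) (ha : ∀ x, 0 ≤ a x) (hb : ∀ x, 0 ≤ b x)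
    (hab : ∀ x, a x ≠ 0 → b x ≠ 0) (ha1 : ∑ x, a x = 1) (hb1 : ∑ x, b x ≤ 1) :
    0 ≤ ∑ x, a x * Real.log (a x / b x) := by
  have key : ∀ x, a x * Real.log (b x / a x) ≤ b x - a x := by
    intro x
    rcases (ha x).eq_or_lt with h | h
    · simp [← h, hb x]
    · have hbx : 0 < b x := lt_of_le_of_ne (hb x) (Ne.symm (hab x h.ne'))
      have hl := Real.log_le_sub_one_of_pos (div_pos hbx h)
      calc a x * Real.log (b x / a x) ≤ a x * (b x / a x - 1) :=
            mul_le_mul_of_nonneg_left hl h.le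
        _ = b x - a x := by field_simp
  have h2 : ∑ x, a x * Real.log (b x / a x) ≤ 0 := by
    calc ∑ x, a x * Real.log (b x / a x) ≤ ∑ x, (b x - a x) :=
          Finset.sum_le_sum fun x _ => key x
      _ = (∑ x, b x) - (∑ x, a x) := Finset.sum_sub_distrib _ _
      _ ≤ 0 := by rw [ha1]; linarith
  have h3 : ∀ x, a x * Real.log (a x / b x) = -(a x * Real.log (b x / a x)) := by
    intro x
    rw [show a x / b x = (b x / a x)⁻¹ from (inv_div _ _).symm, Real.log_inv]
    ring
  rw [Finset.sum_congr rfl fun x _ => h3 x]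
  rw [Finset.sum_neg_distrib]
  linarith


def Kset (p : Ω → Ω → ℝ) : Set (Ω → Ω → ℝ) :=
  {q | (∀ ω ω', 0 ≤ q ω ω') ∧ (∀ ω, ∑ ω', q ω ω' = 1) ∧ ∀ ω ω', q ω ω' ≠ 0 → 0 < p ω ω'}

noncomputable def Hf (μ : Ω → ℝ) (p q : Ω → Ω → ℝ) : ℝ :=
  ∑ ω, μ ω * ∑ ω', q ω ω' * Real.log (q ω ω' / p ω ω')

noncomputable def Zf (p : Ω → Ω → ℝ) (g : Ω → ℝ) (ω : Ω) : ℝ :=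
  ∑ ω', p ω ω' * Real.exp (g ω')

noncomputable def Phi (μ : Ω → ℝ) (p : Ω → Ω → ℝ) (g : Ω → ℝ) : ℝ :=
  (∑ ω, μ ω * g ω) - ∑ ω, μ ω * Real.log (Zf p g ω)

noncomputable def gibbs (p : Ω → Ω → ℝ) (g : Ω → ℝ) (ω ω' : Ω) : ℝ :=
  p ω ω' * Real.exp (g ω') / Zf p g ω

section
variable {μ : Ω → ℝ} {p : Ω → Ω → ℝ}
  (hp0 : ∀ ω ω', 0 ≤ p ω ω') (hp1 : ∀ ω, ∑ ω', p ω ω' = 1)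

include hp0 hp1

lemma Zf_pos (g : Ω → ℝ) (ω : Ω) : 0 < Zf p g ω := by
  have hne : ∃ ω', p ω ω' ≠ 0 := by
    by_contra h
    push_neg at h
    have := hp1 ω
    simp [h] at this
  obtain ⟨ω₀, h₀⟩ := hne
  refine Finset.sum_pos' (fun ω' _ => mul_nonneg (hp0 ω ω') (Real.exp_pos _).le) ⟨ω₀, mem_univ _, ?_⟩
  exact mul_pos (lt_of_le_of_ne (hp0 ω ω₀) (Ne.symm h₀)) (Real.exp_pos _)

lemma gibbs_nonneg (g : Ω → ℝ) (ω ω' : Ω) : 0 ≤ gibbs p g ω ω' :=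
  div_nonneg (mul_nonneg (hp0 ω ω') (Real.exp_pos _).le) (Zf_pos hp0 hp1 g ω).le

lemma gibbs_row (g : Ω → ℝ) (ω : Ω) : ∑ ω', gibbs p g ω ω' = 1 := by
  unfold gibbs
  rw [← Finset.sum_div, div_eq_one_iff_eq (Zf_pos hp0 hp1 g ω).ne']
  rfl

lemma gibbs_mem (g : Ω → ℝ) : gibbs p g ∈ Kset p := by
  refine ⟨gibbs_nonneg hp0 hp1 g, gibbs_row hp0 hp1 g, fun ω ω' h => ?_⟩
  rcases (hp0 ω ω').eq_or_lt with h0 | h0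
  · exact absurd (by simp [gibbs, ← h0]) h
  · exact h0

lemma gibbs_pos (g : Ω → ℝ) (ω ω' : Ω) (h : 0 < p ω ω') : 0 < gibbs p g ω ω' :=
  div_pos (mul_pos h (Real.exp_pos _)) (Zf_pos hp0 hp1 g ω)

lemma gibbs_H (hμ0 : ∀ ω, 0 ≤ μ ω) (g : Ω → ℝ) :
    Hf μ p (gibbs p g) = (∑ ω, μ ω * ∑ ω', gibbs p g ω ω' * g ω')
      - ∑ ω, μ ω * Real.log (Zf p g ω) := by
  unfold Hf
  rw [← Finset.sum_sub_distrib]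
  apply Finset.sum_congr rfl
  intro ω _
  rw [← mul_sub]
  congr 1
  have hrow : ∀ ω', gibbs p g ω ω' * Real.log (gibbs p g ω ω' / p ω ω')
      = gibbs p g ω ω' * g ω' - gibbs p g ω ω' * Real.log (Zf p g ω) := by
    intro ω'
    rcases (hp0 ω ω').eq_or_lt with h0 | h0
    · simp [gibbs, ← h0]
    · have hZ := Zf_pos hp0 hp1 g ω
      have : gibbs p g ω ω' / p ω ω' = Real.exp (g ω') / Zf p g ω := by
        unfold gibbs; field_simp
      rw [this, Real.log_div (Real.exp_pos _).ne' hZ.ne', Real.log_exp]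
      ring
  rw [Finset.sum_congr rfl fun ω' _ => hrow ω', Finset.sum_sub_distrib, ← Finset.sum_mul,
    gibbs_row hp0 hp1 g ω, one_mul]

omit hp0 hp1 in
lemma swap_sum (q : Ω → Ω → ℝ) (g : Ω → ℝ) :
    ∑ ω, μ ω * ∑ ω', q ω ω' * g ω' = ∑ ω', (∑ ω, μ ω * q ω ω') * g ω' := by
  simp_rw [Finset.mul_sum, Finset.sum_mul]
  rw [Finset.sum_comm]
  apply Finset.sum_congr rfl; intros; apply Finset.sum_congr rfl; intros; ring

lemma phi_eq (hμ0 : ∀ ω, 0 ≤ μ ω) (g : Ω → ℝ) :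
    Phi μ p g = Hf μ p (gibbs p g) + (∑ ω, μ ω * g ω)
      - ∑ ω', (∑ ω, μ ω * gibbs p g ω ω') * g ω' := by
  rw [gibbs_H hp0 hp1 hμ0 g, ← swap_sum (gibbs p g) g]
  unfold Phi
  ring

lemma H_nonneg (hμ0 : ∀ ω, 0 ≤ μ ω) {q : Ω → Ω → ℝ} (hq : q ∈ Kset p) :
    0 ≤ Hf μ p q := by
  obtain ⟨hq0, hq1, hqs⟩ := hq
  refine Finset.sum_nonneg fun ω _ => mul_nonneg (hμ0 ω) ?_
  exact relent_nonneg (q ω) (p ω) (hq0 ω) (hp0 ω)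
    (fun ω' h => (hqs ω ω' h).ne') (hq1 ω) (hp1 ω).le

lemma weak_duality (hμ0 : ∀ ω, 0 ≤ μ ω) {q : Ω → Ω → ℝ} (hq : q ∈ Kset p)
    (hst : ∀ ω', ∑ ω, μ ω * q ω ω' = μ ω') (g : Ω → ℝ) :
    Phi μ p g ≤ Hf μ p q := by
  obtain ⟨hq0, hq1, hqs⟩ := hq
  have row : ∀ ω, (∑ ω', q ω ω' * g ω') - Real.log (Zf p g ω)
      ≤ ∑ ω', q ω ω' * Real.log (q ω ω' / p ω ω') := by
    intro ω
    have hZ := Zf_pos hp0 hp1 g ω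
    have key : ∀ ω', q ω ω' * Real.log (q ω ω' / gibbs p g ω ω')
        = q ω ω' * Real.log (q ω ω' / p ω ω') - q ω ω' * g ω'
          + q ω ω' * Real.log (Zf p g ω) := by
      intro ω'
      rcases eq_or_ne (q ω ω') 0 with h | h
      · simp [h]
      · have hp' : 0 < p ω ω' := hqs ω ω' h
        have hgb : 0 < gibbs p g ω ω' := gibbs_pos hp0 hp1 g ω ω' hp'
        have hq' : 0 < q ω ω' := lt_of_le_of_ne (hq0 ω ω') (Ne.symm h)
        rw [Real.log_div h hgb.ne', Real.log_div h hp'.ne']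
        unfold gibbs
        rw [Real.log_div (mul_pos hp' (Real.exp_pos _)).ne' hZ.ne',
          Real.log_mul hp'.ne' (Real.exp_pos _).ne', Real.log_exp]
        ring
    have hrel : 0 ≤ ∑ ω', q ω ω' * Real.log (q ω ω' / gibbs p g ω ω') :=
      relent_nonneg (q ω) (gibbs p g ω) (hq0 ω) (gibbs_nonneg hp0 hp1 g ω)
        (fun ω' h => (gibbs_pos hp0 hp1 g ω ω' (hqs ω ω' h)).ne')
        (hq1 ω) (gibbs_row hp0 hp1 g ω).le
    rw [Finset.sum_congr rfl fun ω' _ => key ω'] at hrel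
    rw [Finset.sum_add_distrib, Finset.sum_sub_distrib, ← Finset.sum_mul, hq1 ω, one_mul] at hrel
    linarith
  have main : ∑ ω, μ ω * ((∑ ω', q ω ω' * g ω') - Real.log (Zf p g ω)) ≤ Hf μ p q :=
    Finset.sum_le_sum fun ω _ => mul_le_mul_of_nonneg_left (row ω) (hμ0 ω)
  have expand : ∑ ω, μ ω * ((∑ ω', q ω ω' * g ω') - Real.log (Zf p g ω))
      = (∑ ω, μ ω * ∑ ω', q ω ω' * g ω') - ∑ ω, μ ω * Real.log (Zf p g ω) := by
    rw [← Finset.sum_sub_distrib]; apply Finset.sum_congr rfl; intros; ring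
  have stat : ∑ ω, μ ω * ∑ ω', q ω ω' * g ω' = ∑ ω, μ ω * g ω := by
    rw [swap_sum q g]
    apply Finset.sum_congr rfl
    intro ω' _
    rw [hst ω']
  rw [expand, stat] at main
  exact main

end


def Aset (μ : Ω → ℝ) (p : Ω → Ω → ℝ) : Set (ℝ × (Ω → ℝ)) :=
  {x | ∃ q ∈ Kset p, Hf μ p q ≤ x.1 ∧ x.2 = fun ω' => (∑ ω, μ ω * q ω ω') - μ ω'}

lemma heval (ω ω' : Ω) : Continuous fun q : Ω → Ω → ℝ => q ω ω' :=
  (continuous_apply ω').comp (continuous_apply ω)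

lemma K_isClosed (p : Ω → Ω → ℝ) : IsClosed (Kset p) := by
  have : Kset p = (⋂ ω, ⋂ ω', {q : Ω → Ω → ℝ | 0 ≤ q ω ω'}) ∩
      ((⋂ ω, {q : Ω → Ω → ℝ | ∑ ω', q ω ω' = 1}) ∩
       (⋂ ω, ⋂ ω', {q : Ω → Ω → ℝ | q ω ω' ≠ 0 → 0 < p ω ω'})) := by
    ext q
    simp only [Kset, Set.mem_inter_iff, Set.mem_iInter, Set.mem_setOf_eq]
  rw [this]
  refine IsClosed.inter ?_ (IsClosed.inter ?_ ?_)
  · exact isClosed_iInter fun ω => isClosed_iInter fun ω' =>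
      isClosed_le continuous_const (heval ω ω')
  · exact isClosed_iInter fun ω =>
      isClosed_eq (continuous_finset_sum _ fun ω' _ => heval ω ω') continuous_const
  · refine isClosed_iInter fun ω => isClosed_iInter fun ω' => ?_
    by_cases h : 0 < p ω ω'
    · have : {q : Ω → Ω → ℝ | q ω ω' ≠ 0 → 0 < p ω ω'} = Set.univ := by
        ext q; simp [h]
      rw [this]; exact isClosed_univ
    · have : {q : Ω → Ω → ℝ | q ω ω' ≠ 0 → 0 < p ω ω'} = {q | q ω ω' = 0} := by
        ext q; simp only [Set.mem_setOf_eq]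
        constructor
        · intro hq; by_contra h'; exact h (hq h')
        · intro hq h'; exact absurd hq h'
      rw [this]; exact isClosed_eq (heval ω ω') continuous_const

lemma K_compact (p : Ω → Ω → ℝ) : IsCompact (Kset p) := by
  refine Metric.isCompact_of_isClosed_isBounded (K_isClosed p) ?_
  refine (Metric.isBounded_closedBall (x := (0 : Ω → Ω → ℝ)) (r := 1)).subset ?_
  intro q hq
  obtain ⟨hq0, hq1, -⟩ := hq
  rw [Metric.mem_closedBall, dist_zero_right]
  rw [pi_norm_le_iff_of_nonneg zero_le_one]
  intro ω
  rw [pi_norm_le_iff_of_nonneg zero_le_one]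
  intro ω'
  rw [Real.norm_eq_abs, abs_le]
  have hle : q ω ω' ≤ 1 := by
    have := Finset.single_le_sum (f := q ω) (fun ω'' _ => hq0 ω ω'') (mem_univ ω')
    rw [hq1 ω] at this
    exact this
  exact ⟨by linarith [hq0 ω ω'], hle⟩

lemma H_cont (μ : Ω → ℝ) (p : Ω → Ω → ℝ) : Continuous (Hf μ p) := by
  unfold Hf
  refine continuous_finset_sum _ fun ω _ => Continuous.mul continuous_const ?_
  refine continuous_finset_sum _ fun ω' _ => ?_
  by_cases hc : p ω ω' = 0
  · simp only [hc, div_zero, Real.log_zero, mul_zero]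
    exact continuous_const
  · have : (fun q : Ω → Ω → ℝ => q ω ω' * Real.log (q ω ω' / p ω ω')) =
        fun q => q ω ω' * Real.log (q ω ω') - q ω ω' * Real.log (p ω ω') := by
      funext q
      rcases eq_or_ne (q ω ω') 0 with h | h
      · simp [h]
      · rw [Real.log_div h hc]; ring
    rw [this]
    exact (Real.continuous_mul_log.comp (heval ω ω')).sub ((heval ω ω').mul continuous_const)

lemma entry_convex {c : ℝ} (hc : 0 ≤ c) {x y a b : ℝ} (hx : 0 ≤ x) (hy : 0 ≤ y)
    (ha : 0 ≤ a) (hb : 0 ≤ b) (hab : a + b = 1) :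
    (a * x + b * y) * Real.log ((a * x + b * y) / c)
      ≤ a * (x * Real.log (x / c)) + b * (y * Real.log (y / c)) := by
  rcases hc.eq_or_lt with h | h
  · simp [← h]
  · have key : ∀ t : ℝ, t * Real.log (t / c) = t * Real.log t - t * Real.log c := by
      intro t
      rcases eq_or_ne t 0 with h' | h'
      · simp [h']
      · rw [Real.log_div h' h.ne']; ring
    rw [key, key, key]
    have hcx := Real.convexOn_mul_log.2 (Set.mem_Ici.mpr hx) (Set.mem_Ici.mpr hy) ha hb hab
    simp only [smul_eq_mul] at hcx
    nlinarith [hcx]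

lemma A_convex (μ : Ω → ℝ) (p : Ω → Ω → ℝ) (hμ0 : ∀ ω, 0 ≤ μ ω)
    (hp0 : ∀ ω ω', 0 ≤ p ω ω') : Convex ℝ (Aset μ p) := by
  rintro x ⟨q₁, ⟨hq₁0, hq₁1, hq₁s⟩, hH₁, hv₁⟩ y ⟨q₂, ⟨hq₂0, hq₂1, hq₂s⟩, hH₂, hv₂⟩ a b ha hb hab
  refine ⟨fun ω ω' => a * q₁ ω ω' + b * q₂ ω ω', ⟨?_, ?_, ?_⟩, ?_, ?_⟩
  · exact fun ω ω' => add_nonneg (mul_nonneg ha (hq₁0 ω ω')) (mul_nonneg hb (hq₂0 ω ω'))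
  · intro ω
    rw [Finset.sum_add_distrib, ← Finset.mul_sum, ← Finset.mul_sum, hq₁1 ω, hq₂1 ω]
    simpa using hab
  · intro ω ω' h
    rcases eq_or_ne (q₁ ω ω') 0 with h1 | h1
    · rcases eq_or_ne (q₂ ω ω') 0 with h2 | h2
      · exact absurd (by simp [h1, h2]) h
      · exact hq₂s ω ω' h2
    · exact hq₁s ω ω' h1
  · have hin : Hf μ p (fun ω ω' => a * q₁ ω ω' + b * q₂ ω ω')
        ≤ a * Hf μ p q₁ + b * Hf μ p q₂ := by
      unfold Hf
      rw [Finset.mul_sum, Finset.mul_sum, ← Finset.sum_add_distrib]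
      refine Finset.sum_le_sum fun ω _ => ?_
      rw [show a * (μ ω * ∑ ω', q₁ ω ω' * Real.log (q₁ ω ω' / p ω ω')) +
            b * (μ ω * ∑ ω', q₂ ω ω' * Real.log (q₂ ω ω' / p ω ω'))
          = μ ω * (a * (∑ ω', q₁ ω ω' * Real.log (q₁ ω ω' / p ω ω')) +
            b * (∑ ω', q₂ ω ω' * Real.log (q₂ ω ω' / p ω ω'))) from by ring]
      refine mul_le_mul_of_nonneg_left ?_ (hμ0 ω)
      rw [Finset.mul_sum, Finset.mul_sum, ← Finset.sum_add_distrib]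
      exact Finset.sum_le_sum fun ω' _ =>
        entry_convex (hp0 ω ω') (hq₁0 ω ω') (hq₂0 ω ω') ha hb hab
    calc Hf μ p (fun ω ω' => a * q₁ ω ω' + b * q₂ ω ω') ≤ a * Hf μ p q₁ + b * Hf μ p q₂ := hin
      _ ≤ a * x.1 + b * y.1 := by
          have := mul_le_mul_of_nonneg_left hH₁ ha
          have := mul_le_mul_of_nonneg_left hH₂ hb
          linarith
      _ = (a • x + b • y).1 := by simp [Prod.smul_fst]
  · show (a • x + b • y).2 = _
    have : (a • x + b • y).2 = fun ω' => a * x.2 ω' + b * y.2 ω' := by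
      funext ω'; simp
    rw [this, hv₁, hv₂]
    funext ω'
    simp only
    have hsum : ∑ ω, μ ω * (a * q₁ ω ω' + b * q₂ ω ω')
        = a * (∑ ω, μ ω * q₁ ω ω') + b * (∑ ω, μ ω * q₂ ω ω') := by
      rw [Finset.mul_sum, Finset.mul_sum, ← Finset.sum_add_distrib]
      exact Finset.sum_congr rfl fun ω _ => by ring
    rw [hsum]
    have : a * ((∑ ω, μ ω * q₁ ω ω') - μ ω') + b * ((∑ ω, μ ω * q₂ ω ω') - μ ω')
        = a * (∑ ω, μ ω * q₁ ω ω') + b * (∑ ω, μ ω * q₂ ω ω') - (a + b) * μ ω' := by ring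
    rw [this, hab, one_mul]

lemma A_isClosed (μ : Ω → ℝ) (p : Ω → Ω → ℝ) : IsClosed (Aset μ p) := by
  set Fm : (Ω → Ω → ℝ) → ℝ × (Ω → ℝ) :=
    fun q => (Hf μ p q, fun ω' => (∑ ω, μ ω * q ω ω') - μ ω') with hFm
  have hFcont : Continuous Fm := by
    refine Continuous.prodMk (H_cont μ p) (continuous_pi fun ω' => ?_)
    exact (continuous_finset_sum _ fun ω _ => continuous_const.mul (heval ω ω')).sub
      continuous_const
  have hB : IsCompact (Fm '' Kset p) := (K_compact p).image hFcont
  have hC : IsClosed {x : ℝ × (Ω → ℝ) | 0 ≤ x.1 ∧ x.2 = 0} :=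
    (isClosed_le continuous_const continuous_fst).inter
      (isClosed_eq continuous_snd continuous_const)
  have hAeq : Aset μ p = (Fm '' Kset p) + {x : ℝ × (Ω → ℝ) | 0 ≤ x.1 ∧ x.2 = 0} := by
    ext x
    rw [Set.mem_add]
    constructor
    · rintro ⟨q, hq, hH, hv⟩
      refine ⟨Fm q, Set.mem_image_of_mem _ hq, (x.1 - Hf μ p q, 0), ⟨by simpa using hH, rfl⟩, ?_⟩
      apply Prod.ext
      · simp [hFm]
      · simp [hFm, hv]
    · rintro ⟨b, ⟨q, hq, rfl⟩, c, ⟨hc1, hc2⟩, rfl⟩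
      refine ⟨q, hq, ?_, ?_⟩
      · simpa [hFm] using hc1
      · simp [hFm, hc2]
  rw [hAeq]
  exact hC.add_left_of_isCompact hB


section
variable {μ : Ω → ℝ} {p : Ω → Ω → ℝ}

lemma decomp (φ : (ℝ × (Ω → ℝ)) →L[ℝ] ℝ) (x : ℝ × (Ω → ℝ)) :
    φ x = x.1 * φ (1, 0) + ∑ ω, x.2 ω * φ ((0 : ℝ), (Pi.single ω 1 : Ω → ℝ)) := by
  have hx : x = x.1 • ((1 : ℝ), (0 : Ω → ℝ))
      + ∑ ω, x.2 ω • (((0 : ℝ), (Pi.single ω 1 : Ω → ℝ)) : ℝ × (Ω → ℝ)) := by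
    apply Prod.ext
    · simp [Prod.fst_sum]
    · simp only [Prod.snd_add, Prod.smul_snd, Prod.snd_sum, smul_zero, zero_add]
      funext j
      rw [Finset.sum_apply]
      simp [Pi.single_apply, mul_ite]
  conv_lhs => rw [hx]
  rw [map_add, map_smul, map_sum, smul_eq_mul]
  congr 1
  refine Finset.sum_congr rfl fun ω _ => ?_
  rw [map_smul, smul_eq_mul]

lemma Phi_zero (hp1 : ∀ ω, ∑ ω', p ω ω' = 1) : Phi μ p (0 : Ω → ℝ) = 0 := by
  unfold Phi Zf
  simp [hp1]

lemma strong (hμ0 : ∀ ω, 0 ≤ μ ω) (hp0 : ∀ ω ω', 0 ≤ p ω ω')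
    (hp1 : ∀ ω, ∑ ω', p ω ω' = 1) (s : ℝ) (hs : ∀ g : Ω → ℝ, Phi μ p g ≤ s) :
    ∃ q ∈ Kset p, (∀ ω', ∑ ω, μ ω * q ω ω' = μ ω') ∧ Hf μ p q ≤ s := by
  by_contra hcon
  push_neg at hcon
  have hA : ((s, 0) : ℝ × (Ω → ℝ)) ∉ Aset μ p := by
    rintro ⟨q, hqK, hH, hv⟩
    have hst : ∀ ω', ∑ ω, μ ω * q ω ω' = μ ω' := by
      intro ω'
      have h0 : (0 : ℝ) = (∑ ω, μ ω * q ω ω') - μ ω' := congrFun hv ω'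
      linarith
    exact absurd hH (not_le.mpr (hcon q hqK hst))
  obtain ⟨φ, u, hu1, hu2⟩ := geometric_hahn_banach_point_closed
    (A_convex μ p hμ0 hp0) (A_isClosed μ p) hA
  set β := φ (1, (0 : Ω → ℝ)) with hβdef
  set f : Ω → ℝ := fun ω => φ ((0 : ℝ), (Pi.single ω 1 : Ω → ℝ)) with hfdef
  have hdec : ∀ x : ℝ × (Ω → ℝ), φ x = x.1 * β + ∑ ω, x.2 ω * f ω := fun x => decomp φ x
  have key : ∀ q ∈ Kset p, ∀ t : ℝ, 0 ≤ t →
      u < (Hf μ p q + t) * β + ∑ ω', ((∑ ω, μ ω * q ω ω') - μ ω') * f ω' := by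
    intro q hq t ht
    have hmem : ((Hf μ p q + t, fun ω' => (∑ ω, μ ω * q ω ω') - μ ω') : ℝ × (Ω → ℝ))
        ∈ Aset μ p := ⟨q, hq, le_add_of_nonneg_right ht, rfl⟩
    have h := hu2 _ hmem
    rw [hdec] at h
    exact h
  have hpK : p ∈ Kset p := ⟨hp0, hp1, fun ω ω' h => lt_of_le_of_ne (hp0 ω ω') (Ne.symm h)⟩
  have hs0 : 0 ≤ s := by have := hs 0; rwa [Phi_zero hp1] at this
  have hβ : 0 ≤ β := by
    by_contra hβneg
    push_neg at hβneg
    set c₀ := ∑ ω', ((∑ ω, μ ω * p ω ω') - μ ω') * f ω' with hc₀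
    set t := max 0 ((u - c₀) / β - Hf μ p p) with htdef
    have ht : 0 ≤ t := le_max_left _ _
    have h1 : (u - c₀) / β ≤ Hf μ p p + t := by
      have := le_max_right 0 ((u - c₀) / β - Hf μ p p)
      linarith [this]
    have h2 := key p hpK t ht
    have h3 : (Hf μ p p + t) * β ≤ (u - c₀) / β * β :=
      mul_le_mul_of_nonpos_right h1 hβneg.le
    rw [div_mul_cancel₀ _ hβneg.ne] at h3
    linarith
  have hsβ : φ ((s : ℝ), (0 : Ω → ℝ)) = s * β := by
    rw [hdec]
    simp
  rcases hβ.eq_or_lt with hβ0 | hβpos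
  · -- case β = 0
    have hupos : 0 < u := by rw [hsβ, ← hβ0, mul_zero] at hu1; exact hu1
    have hlin : ∀ q ∈ Kset p, u < ∑ ω', ((∑ ω, μ ω * q ω ω') - μ ω') * f ω' := by
      intro q hq
      have := key q hq 0 le_rfl
      rwa [← hβ0, mul_zero, zero_add] at this
    set t := (s + 1) / u with htdef
    have htpos : 0 < t := div_pos (by linarith) hupos
    set g : Ω → ℝ := fun ω => t * (-f ω) with hgdef
    set q := gibbs p g with hqdef
    have hqK := gibbs_mem hp0 hp1 g
    have hPhi := phi_eq hp0 hp1 hμ0 g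
    have halg : (∑ ω, μ ω * g ω) - ∑ ω', (∑ ω, μ ω * q ω ω') * g ω'
        = t * ∑ ω', ((∑ ω, μ ω * q ω ω') - μ ω') * f ω' := by
      rw [Finset.mul_sum, ← Finset.sum_sub_distrib]
      refine Finset.sum_congr rfl fun ω' _ => ?_
      simp only [hgdef]
      ring
    have hub := hs g
    have hHn := H_nonneg hp0 hp1 hμ0 hqK
    have hlinq := hlin q hqK
    have hre : Phi μ p g = Hf μ p q
        + ((∑ ω, μ ω * g ω) - ∑ ω', (∑ ω, μ ω * q ω ω') * g ω') := by
      rw [hPhi]; ring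
    rw [hre, halg] at hub
    have hmul : t * u < t * ∑ ω', ((∑ ω, μ ω * q ω ω') - μ ω') * f ω' :=
      mul_lt_mul_of_pos_left hlinq htpos
    have htu : t * u = s + 1 := by rw [htdef]; field_simp
    nlinarith
  · -- case β > 0
    set g : Ω → ℝ := fun ω => -f ω / β with hgdef
    set q := gibbs p g with hqdef
    have hqK := gibbs_mem hp0 hp1 g
    have hkey := key q hqK 0 le_rfl
    rw [add_zero] at hkey
    have hPhi := phi_eq hp0 hp1 hμ0 g
    have halg : ∑ ω', ((∑ ω, μ ω * q ω ω') - μ ω') * f ω'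
        = β * ((∑ ω, μ ω * g ω) - ∑ ω', (∑ ω, μ ω * q ω ω') * g ω') := by
      rw [mul_sub, Finset.mul_sum, Finset.mul_sum, ← Finset.sum_sub_distrib]
      refine Finset.sum_congr rfl fun ω' _ => ?_
      have hfval : f ω' = -(β * g ω') := by
        rw [hgdef]
        field_simp
      rw [hfval]
      ring
    rw [halg] at hkey
    have hPhig : β * Phi μ p g = Hf μ p q * β
        + β * ((∑ ω, μ ω * g ω) - ∑ ω', (∑ ω, μ ω * q ω ω') * g ω') := by
      rw [hPhi]; ring
    have hlt : s * β < β * Phi μ p g := by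
      rw [hPhig]
      calc s * β < u := by rw [← hsβ]; exact hu1
        _ < _ := hkey
    have : s < Phi μ p g := by
      have := (mul_lt_mul_iff_right₀ hβpos).mp (by linarith : β * s < β * Phi μ p g)
      exact this
    exact absurd (hs g) (not_le.mpr this)

end
end DVaux


/-- Donsker–Varadhan identity on a finite space: with the uniform kernel
`p(ω,ω') = |R|⁻¹ #{z : T_zω = ω'}`, for a probability vector `μ` on finite `Ω`,
`inf_{q : μq = μ} H(μ×q|μ×p) = sup_f { E^μ[f] − E^μ[log ∑_z |R|⁻¹ e^{f(T_zω)}] }`,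
with the conventions encoded by taking `sInf`/`sSup` in `EReal`
(`sInf ∅ = +∞`, unbounded suprema are `+∞`). -/
theorem stmt_17 {Ω R : Type*} [Fintype Ω] [DecidableEq Ω] [Fintype R] [Nonempty R]
    (T : R → Ω → Ω) (μ : Ω → ℝ)
    (hμ0 : ∀ ω, 0 ≤ μ ω) (hμ1 : ∑ ω, μ ω = 1) :
    sInf {x : EReal | ∃ q : Ω → Ω → ℝ,
        (∀ ω ω', 0 ≤ q ω ω') ∧ (∀ ω, ∑ ω', q ω ω' = 1) ∧
        (∀ ω ω', q ω ω' ≠ 0 → ∃ z : R, T z ω = ω') ∧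
        (∀ ω', ∑ ω, μ ω * q ω ω' = μ ω') ∧
        x = ((∑ ω, μ ω * ∑ ω', q ω ω' *
              Real.log (q ω ω' / ((Fintype.card R : ℝ)⁻¹ *
                (Finset.univ.filter (fun z : R => T z ω = ω')).card)) : ℝ) : EReal)}
      = sSup {x : EReal | ∃ f : Ω → ℝ,
        x = (((∑ ω, μ ω * f ω) - ∑ ω, μ ω *
              Real.log (∑ z : R, (Fintype.card R : ℝ)⁻¹ *
                Real.exp (f (T z ω))) : ℝ) : EReal)} := by
  classical
  set p : Ω → Ω → ℝ := fun ω ω' => (Fintype.card R : ℝ)⁻¹ *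
    ((Finset.univ.filter (fun z : R => T z ω = ω')).card : ℝ) with hp
  have hnpos : (0 : ℝ) < (Fintype.card R : ℝ) := by
    exact_mod_cast Fintype.card_pos
  have hp0 : ∀ ω ω', 0 ≤ p ω ω' := fun ω ω' =>
    mul_nonneg (inv_nonneg.mpr hnpos.le) (Nat.cast_nonneg _)
  have hp1 : ∀ ω, ∑ ω', p ω ω' = 1 := by
    intro ω
    have hcard : ∑ ω' : Ω, ((Finset.univ.filter (fun z : R => T z ω = ω')).card : ℝ)
        = (Fintype.card R : ℝ) := by
      rw [← Nat.cast_sum]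
      congr 1
      exact (Finset.card_eq_sum_card_fiberwise (fun x _ => mem_univ _)).symm
    simp only [hp]
    rw [← Finset.mul_sum, hcard, inv_mul_cancel₀ hnpos.ne']
  have hsupp : ∀ ω ω', (0 < p ω ω') ↔ ∃ z : R, T z ω = ω' := by
    intro ω ω'
    constructor
    · intro h
      have hcpos : 0 < (Finset.univ.filter (fun z : R => T z ω = ω')).card := by
        by_contra hc
        push_neg at hc
        have hc0 : (Finset.univ.filter (fun z : R => T z ω = ω')).card = 0 :=
          Nat.le_zero.mp hc
        rw [hp] at h
        simp only [hc0, Nat.cast_zero, mul_zero] at h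
        exact lt_irrefl 0 h
      obtain ⟨z, hz⟩ := Finset.card_pos.mp hcpos
      exact ⟨z, (Finset.mem_filter.mp hz).2⟩
    · rintro ⟨z, hz⟩
      have hzmem : z ∈ Finset.univ.filter (fun z : R => T z ω = ω') :=
        Finset.mem_filter.mpr ⟨mem_univ _, hz⟩
      have : 0 < (Finset.univ.filter (fun z : R => T z ω = ω')).card :=
        Finset.card_pos.mpr ⟨z, hzmem⟩
      exact mul_pos (inv_pos.mpr hnpos) (by exact_mod_cast this)
  have hZeq : ∀ (f : Ω → ℝ) (ω : Ω),
      ∑ z : R, (Fintype.card R : ℝ)⁻¹ * Real.exp (f (T z ω)) = DVaux.Zf p f ω := by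
    intro f ω
    unfold DVaux.Zf
    calc ∑ z : R, (Fintype.card R : ℝ)⁻¹ * Real.exp (f (T z ω))
        = ∑ ω' : Ω, ∑ z ∈ Finset.univ.filter (fun z : R => T z ω = ω'),
            (Fintype.card R : ℝ)⁻¹ * Real.exp (f (T z ω)) :=
          (Finset.sum_fiberwise_of_maps_to (fun x _ => mem_univ _) _).symm
      _ = ∑ ω', p ω ω' * Real.exp (f ω') := by
          refine Finset.sum_congr rfl fun ω' _ => ?_
          rw [Finset.sum_congr rfl (fun z hz => by
            rw [(Finset.mem_filter.mp hz).2] :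
            ∀ z ∈ Finset.univ.filter (fun z : R => T z ω = ω'), _ =
              (Fintype.card R : ℝ)⁻¹ * Real.exp (f ω'))]
          rw [Finset.sum_const, nsmul_eq_mul, hp]
          ring
  have hPhiEq : ∀ f : Ω → ℝ,
      ((∑ ω, μ ω * f ω) - ∑ ω, μ ω *
        Real.log (∑ z : R, (Fintype.card R : ℝ)⁻¹ * Real.exp (f (T z ω))))
      = DVaux.Phi μ p f := by
    intro f
    unfold DVaux.Phi
    congr 1
    exact Finset.sum_congr rfl fun ω _ => by rw [hZeq f ω]
  have hHEq : ∀ q : Ω → Ω → ℝ,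
      (∑ ω, μ ω * ∑ ω', q ω ω' * Real.log (q ω ω' / ((Fintype.card R : ℝ)⁻¹ *
        (Finset.univ.filter (fun z : R => T z ω = ω')).card)))
      = DVaux.Hf μ p q := fun q => rfl
  apply le_antisymm
  · -- sInf ≤ sSup
    by_cases htop : sSup {x : EReal | ∃ f : Ω → ℝ,
        x = (((∑ ω, μ ω * f ω) - ∑ ω, μ ω *
              Real.log (∑ z : R, (Fintype.card R : ℝ)⁻¹ *
                Real.exp (f (T z ω))) : ℝ) : EReal)} = ⊤
    · rw [htop]; exact le_top
    · set S := {x : EReal | ∃ f : Ω → ℝ,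
        x = (((∑ ω, μ ω * f ω) - ∑ ω, μ ω *
              Real.log (∑ z : R, (Fintype.card R : ℝ)⁻¹ *
                Real.exp (f (T z ω))) : ℝ) : EReal)} with hS
      have hmem0 : (((∑ ω, μ ω * (0:Ω→ℝ) ω) - ∑ ω, μ ω *
              Real.log (∑ z : R, (Fintype.card R : ℝ)⁻¹ *
                Real.exp ((0:Ω→ℝ) (T z ω))) : ℝ) : EReal) ∈ S := ⟨0, rfl⟩
      have hbot : sSup S ≠ ⊥ := by
        intro hb
        have := le_sSup hmem0
        rw [hb, le_bot_iff] at this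
        exact (EReal.coe_ne_bot _) this
      set s : ℝ := (sSup S).toReal with hsdef
      have hcoe : (s : EReal) = sSup S := EReal.coe_toReal htop hbot
      have hsb : ∀ g : Ω → ℝ, DVaux.Phi μ p g ≤ s := by
        intro g
        have hmem : ((DVaux.Phi μ p g : ℝ) : EReal) ∈ S := ⟨g, by rw [hPhiEq g]⟩
        have h := le_sSup hmem
        rw [← hcoe] at h
        exact_mod_cast h
      obtain ⟨q, hqK, hst, hH⟩ := DVaux.strong hμ0 hp0 hp1 s hsb
      have hmemL : ((DVaux.Hf μ p q : ℝ) : EReal) ∈ {x : EReal | ∃ q : Ω → Ω → ℝ,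
          (∀ ω ω', 0 ≤ q ω ω') ∧ (∀ ω, ∑ ω', q ω ω' = 1) ∧
          (∀ ω ω', q ω ω' ≠ 0 → ∃ z : R, T z ω = ω') ∧
          (∀ ω', ∑ ω, μ ω * q ω ω' = μ ω') ∧
          x = ((∑ ω, μ ω * ∑ ω', q ω ω' *
                Real.log (q ω ω' / ((Fintype.card R : ℝ)⁻¹ *
                  (Finset.univ.filter (fun z : R => T z ω = ω')).card)) : ℝ) : EReal)} := by
        obtain ⟨hq0, hq1, hqs⟩ := hqK
        exact ⟨q, hq0, hq1, fun ω ω' h => (hsupp ω ω').mp (hqs ω ω' h), hst,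
          by rw [hHEq q]⟩
      calc sInf _ ≤ ((DVaux.Hf μ p q : ℝ) : EReal) := sInf_le hmemL
        _ ≤ (s : EReal) := by exact_mod_cast hH
        _ = sSup S := hcoe
  · -- sSup ≤ sInf
    apply le_sInf
    rintro x ⟨q, hq0, hq1, hqs, hst, rfl⟩
    apply sSup_le
    rintro y ⟨f, rfl⟩
    rw [hHEq q, hPhiEq f]
    have hqK : q ∈ DVaux.Kset p :=
      ⟨hq0, hq1, fun ω ω' h => (hsupp ω ω').mpr (hqs ω ω' h)⟩
    exact_mod_cast DVaux.weak_duality hp0 hp1 hμ0 hqK hst f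
end
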